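/- arXiv:2307.08799 — 2 statements merged into one kernel-verified Lean document; each statement's English description precedes it below -/
import Mathlib

section
/- Let k ≥ 0 and let ξ ∈ ℝ^{2n} be such that the function t ↦ ξ·D_t ξ has vanishing derivative of order j at t = 0 for every j ≤ 2k+1 (including the value at t=0). Then ξ is orthogonal to V_k. -/
open Matrix MeasureTheory intervalIntegral

section Aux

open Finset NormedSpace

variable {m : Type*} [Fintype m] [DecidableEq m]

/-- The scalar function `t ↦ ξ ⬝ᵥ exp(tA) v`. -/
noncomputable def gfun (A : Matrix m m ℝ) (ξ v : m → ℝ) : ℝ → ℝ :=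
  fun t => ξ ⬝ᵥ (exp (t • A)) *ᵥ v

lemma gfun_zero_eval (A : Matrix m m ℝ) (ξ v : m → ℝ) : gfun A ξ v 0 = ξ ⬝ᵥ v := by
  simp [gfun, exp_zero, Matrix.one_mulVec]

/-- The linear functional `B ↦ ξ ⬝ᵥ B v` on matrices. -/
noncomputable def Lmap (ξ v : m → ℝ) : Matrix m m ℝ →ₗ[ℝ] ℝ where
  toFun B := ξ ⬝ᵥ B *ᵥ v
  map_add' B C := by simp [add_mulVec, dotProduct_add]
  map_smul' c B := by simp [smul_mulVec, dotProduct_smul]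

/-- The linear functional `v ↦ ξ ⬝ᵥ B v` on vectors. -/
noncomputable def dotMulLin (ξ : m → ℝ) (B : Matrix m m ℝ) : (m → ℝ) →ₗ[ℝ] ℝ where
  toFun v := ξ ⬝ᵥ B *ᵥ v
  map_add' u v := by simp [mulVec_add, dotProduct_add]
  map_smul' c v := by simp [mulVec_smul, dotProduct_smul]

lemma gfun_smooth (A : Matrix m m ℝ) (ξ v : m → ℝ) : ContDiff ℝ ⊤ (gfun A ξ v) := by
  letI : SeminormedRing (Matrix m m ℝ) := Matrix.linftyOpSemiNormedRing
  letI : NormedRing (Matrix m m ℝ) := Matrix.linftyOpNormedRing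
  letI : NormedAlgebra ℝ (Matrix m m ℝ) := Matrix.linftyOpNormedAlgebra
  have h1 : ContDiff ℝ ⊤ (fun t : ℝ => t • A) := contDiff_id.smul contDiff_const
  have h2 : ContDiff ℝ ⊤ (exp : Matrix m m ℝ → Matrix m m ℝ) := by
    rw [contDiff_iff_contDiffAt]
    intro x
    exact (analyticAt_exp_of_mem_ball (𝕂 := ℝ) x (by
      rw [expSeries_radius_eq_top ℝ]; exact edist_lt_top _ _)).contDiffAt
  have h3 : ContDiff ℝ ⊤ (Lmap ξ v : Matrix m m ℝ → ℝ) :=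
    (LinearMap.toContinuousLinearMap (Lmap ξ v)).contDiff
  exact h3.comp (h2.comp h1)

lemma gfun_hasDerivAt (A : Matrix m m ℝ) (ξ v : m → ℝ) (t : ℝ) :
    HasDerivAt (gfun A ξ v) (gfun A ξ (A *ᵥ v) t) t := by
  letI : SeminormedRing (Matrix m m ℝ) := Matrix.linftyOpSemiNormedRing
  letI : NormedRing (Matrix m m ℝ) := Matrix.linftyOpNormedRing
  letI : NormedAlgebra ℝ (Matrix m m ℝ) := Matrix.linftyOpNormedAlgebra
  have hexp : HasDerivAt (fun u : ℝ => exp (u • A)) (exp (t • A) * A) t :=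
    hasDerivAt_exp_smul_const A t
  have h := ((LinearMap.toContinuousLinearMap (Lmap ξ v)).hasFDerivAt).comp_hasDerivAt t hexp
  have h2 : HasDerivAt (gfun A ξ v) (ξ ⬝ᵥ (exp (t • A) * A) *ᵥ v) t := h
  have h3 : ξ ⬝ᵥ (exp (t • A) * A) *ᵥ v = gfun A ξ (A *ᵥ v) t := by
    rw [← Matrix.mulVec_mulVec]; rfl
  rwa [h3] at h2

lemma gfun_deriv (A : Matrix m m ℝ) (ξ v : m → ℝ) :
    deriv (gfun A ξ v) = gfun A ξ (A *ᵥ v) :=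
  funext fun t => (gfun_hasDerivAt A ξ v t).deriv

lemma gfun_iteratedDeriv (A : Matrix m m ℝ) (ξ : m → ℝ) (i : ℕ) :
    ∀ v, iteratedDeriv i (gfun A ξ v) = gfun A ξ ((A ^ i) *ᵥ v) := by
  induction i with
  | zero => intro v; simp [iteratedDeriv_zero]
  | succ i ih =>
    intro v
    rw [iteratedDeriv_succ', gfun_deriv, ih, Matrix.mulVec_mulVec, ← pow_succ]

lemma iteratedDeriv_add'' {f g : ℝ → ℝ} (hf : ContDiff ℝ ⊤ f) (hg : ContDiff ℝ ⊤ g) (N : ℕ) :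
    iteratedDeriv N (fun t => f t + g t) = fun t => iteratedDeriv N f t + iteratedDeriv N g t := by
  funext t
  have h : (fun t => f t + g t) = f + g := rfl
  rw [h, ← iteratedDerivWithin_univ, ← iteratedDerivWithin_univ, ← iteratedDerivWithin_univ]
  exact iteratedDerivWithin_add (Set.mem_univ t) uniqueDiffOn_univ
    ((hf.of_le le_top).contDiffWithinAt) ((hg.of_le le_top).contDiffWithinAt)

lemma iteratedDeriv_zero_fun'' (N : ℕ) :
    iteratedDeriv N (fun _ : ℝ => (0 : ℝ)) = fun _ => 0 := by
  induction N with
  | zero => rfl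
  | succ N ih =>
    rw [iteratedDeriv_succ']
    have : deriv (fun _ : ℝ => (0 : ℝ)) = fun _ : ℝ => (0 : ℝ) := by
      funext t; exact deriv_const t 0
    rw [this, ih]

lemma iteratedDeriv_sum'' {ι : Type*} (s : Finset ι) (f : ι → ℝ → ℝ)
    (hf : ∀ i ∈ s, ContDiff ℝ ⊤ (f i)) (N : ℕ) :
    iteratedDeriv N (fun t => ∑ i ∈ s, f i t) = fun t => ∑ i ∈ s, iteratedDeriv N (f i) t := by
  induction s using Finset.cons_induction with
  | empty => simpa using iteratedDeriv_zero_fun'' N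
  | cons i s his ih =>
    simp only [Finset.sum_cons]
    rw [iteratedDeriv_add'' (hf i (Finset.mem_cons_self i s))
      (ContDiff.sum fun j hj => hf j (Finset.mem_cons_of_mem hj)) N,
      ih fun j hj => hf j (Finset.mem_cons_of_mem hj)]

lemma pascal_sum (a b : ℕ → ℝ) (N : ℕ) :
    ∑ i ∈ range (N + 1), (N.choose i : ℝ) * (a (i + 1) * b (N - i))
      + ∑ i ∈ range (N + 1), (N.choose i : ℝ) * (a i * b (N + 1 - i))
    = ∑ i ∈ range (N + 2), ((N + 1).choose i : ℝ) * (a i * b (N + 1 - i)) := by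
  rw [Finset.sum_range_succ' (fun i => ((N + 1).choose i : ℝ) * (a i * b (N + 1 - i))),
    Finset.sum_range_succ' (fun i => (N.choose i : ℝ) * (a i * b (N + 1 - i)))]
  have h1 : ∀ i ∈ range (N + 1), (((N + 1).choose (i + 1) : ℝ)) * (a (i + 1) * b (N + 1 - (i + 1)))
      = (N.choose i : ℝ) * (a (i + 1) * b (N - i))
        + (N.choose (i + 1) : ℝ) * (a (i + 1) * b (N - i)) := by
    intro i _
    have h : (N + 1).choose (i + 1) = N.choose i + N.choose (i + 1) := Nat.choose_succ_succ N i
    have h' : N + 1 - (i + 1) = N - i := by omega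
    rw [h, h']
    push_cast
    ring
  rw [Finset.sum_congr rfl h1, Finset.sum_add_distrib]
  have h2 : ∑ i ∈ range (N + 1), (N.choose (i + 1) : ℝ) * (a (i + 1) * b (N - i))
      = ∑ i ∈ range N, (N.choose (i + 1) : ℝ) * (a (i + 1) * b (N - i)) := by
    rw [Finset.sum_range_succ, Nat.choose_succ_self]
    simp
  rw [h2]
  have h4 : ∀ i ∈ range N, (N.choose (i + 1) : ℝ) * (a (i + 1) * b (N + 1 - (i + 1)))
      = (N.choose (i + 1) : ℝ) * (a (i + 1) * b (N - i)) := by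
    intro i _
    have h' : N + 1 - (i + 1) = N - i := by omega
    rw [h']
  rw [Finset.sum_congr rfl h4]
  simp
  ring

/-- Leibniz rule for products of the `gfun` family. -/
lemma gfun_mul_iteratedDeriv (A : Matrix m m ℝ) (ξ : m → ℝ) (N : ℕ) :
    ∀ u v : m → ℝ, iteratedDeriv N (fun t => gfun A ξ u t * gfun A ξ v t)
      = fun t => ∑ i ∈ range (N + 1),
          (N.choose i : ℝ) * (gfun A ξ ((A ^ i) *ᵥ u) t * gfun A ξ ((A ^ (N - i)) *ᵥ v) t) := by
  induction N with
  | zero =>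
    intro u v
    simp [iteratedDeriv_zero, Matrix.one_mulVec]
  | succ N ih =>
    intro u v
    rw [iteratedDeriv_succ']
    have hd : deriv (fun t => gfun A ξ u t * gfun A ξ v t)
        = fun t => gfun A ξ (A *ᵥ u) t * gfun A ξ v t + gfun A ξ u t * gfun A ξ (A *ᵥ v) t := by
      funext t
      exact ((gfun_hasDerivAt A ξ u t).mul (gfun_hasDerivAt A ξ v t)).deriv
    rw [hd]
    rw [iteratedDeriv_add'' ((gfun_smooth A ξ (A *ᵥ u)).mul (gfun_smooth A ξ v))
      ((gfun_smooth A ξ u).mul (gfun_smooth A ξ (A *ᵥ v))) N]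
    rw [ih (A *ᵥ u) v, ih u (A *ᵥ v)]
    funext t
    have e1 : ∀ i ∈ range (N + 1),
        (N.choose i : ℝ) * (gfun A ξ ((A ^ i) *ᵥ (A *ᵥ u)) t * gfun A ξ ((A ^ (N - i)) *ᵥ v) t)
        = (N.choose i : ℝ) * (gfun A ξ ((A ^ (i + 1)) *ᵥ u) t * gfun A ξ ((A ^ (N - i)) *ᵥ v) t) := by
      intro i _
      rw [Matrix.mulVec_mulVec, ← pow_succ]
    have e2 : ∀ i ∈ range (N + 1),
        (N.choose i : ℝ) * (gfun A ξ ((A ^ i) *ᵥ u) t * gfun A ξ ((A ^ (N - i)) *ᵥ (A *ᵥ v)) t)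
        = (N.choose i : ℝ) * (gfun A ξ ((A ^ i) *ᵥ u) t * gfun A ξ ((A ^ (N + 1 - i)) *ᵥ v) t) := by
      intro i hi
      rw [Matrix.mulVec_mulVec, ← pow_succ]
      have h' : N + 1 - i = N - i + 1 := by
        rw [mem_range] at hi; omega
      rw [h']
    beta_reduce
    rw [Finset.sum_congr rfl e1, Finset.sum_congr rfl e2]
    exact pascal_sum (fun i => gfun A ξ ((A ^ i) *ᵥ u) t) (fun i => gfun A ξ ((A ^ i) *ᵥ v) t) N

lemma vecMulVec_mulVec' (u v w : m → ℝ) :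
    vecMulVec u v *ᵥ w = (v ⬝ᵥ w) • u := by
  funext i
  simp only [Matrix.mulVec, dotProduct, Matrix.vecMulVec_apply, Pi.smul_apply,
    smul_eq_mul, Finset.sum_mul]
  exact Finset.sum_congr rfl fun j _ => by ring

lemma dot_vecMulVec_expand (E : Matrix m m ℝ) (u v ζ η : m → ℝ) :
    ζ ⬝ᵥ (E * vecMulVec u v * Eᵀ) *ᵥ η = (ζ ⬝ᵥ E *ᵥ u) * (η ⬝ᵥ E *ᵥ v) := by
  rw [← Matrix.mulVec_mulVec, ← Matrix.mulVec_mulVec, Matrix.mulVec_transpose,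
    vecMulVec_mulVec', Matrix.mulVec_smul, dotProduct_smul, smul_eq_mul,
    Matrix.dotProduct_mulVec η E v, dotProduct_comm]
  ring

lemma sum_mulVec' {ι : Type*} (s : Finset ι) (f : ι → Matrix m m ℝ) (w : m → ℝ) :
    (∑ i ∈ s, f i) *ᵥ w = ∑ i ∈ s, f i *ᵥ w := by
  induction s using Finset.cons_induction with
  | empty => simp [Matrix.zero_mulVec]
  | cons i s his ih => simp [Finset.sum_cons, Matrix.add_mulVec, ih]

end Aux
set_option maxHeartbeats 1000000 in
/-- if the function `t ↦ ξ·D_t ξ` has vanishing derivative of order `j`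
at `t = 0` for every `j ≤ 2k+1` (including the value at `t = 0`), then `ξ ⊥ V_k`. -/
theorem vanishing_derivatives_imp_perp (n K : ℕ) (hn : 1 ≤ n)
    (Ω : Matrix (Fin n ⊕ Fin n) (Fin n ⊕ Fin n) ℝ)
    (hΩ : Ω = Matrix.fromBlocks 0 (-1) 1 0)
    (Q : Matrix (Fin n ⊕ Fin n) (Fin n ⊕ Fin n) ℝ) (hQ : Q.IsSymm)
    (F : Matrix (Fin n ⊕ Fin n) (Fin n ⊕ Fin n) ℝ) (hF : F = Ω * Q)
    (l : Fin K → (Fin n ⊕ Fin n) → ℂ)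
    (M : Matrix (Fin n ⊕ Fin n) (Fin n ⊕ Fin n) ℝ)
    (hM : M = ∑ k, (vecMulVec (fun i => (l k i).re) (fun i => (l k i).re)
                  + vecMulVec (fun i => (l k i).im) (fun i => (l k i).im)))
    (N : Matrix (Fin n ⊕ Fin n) (Fin n ⊕ Fin n) ℝ)
    (hN : N = ∑ k, (vecMulVec (fun i => (l k i).re) (fun i => (l k i).im)
                  - vecMulVec (fun i => (l k i).im) (fun i => (l k i).re)))
    (A : Matrix (Fin n ⊕ Fin n) (Fin n ⊕ Fin n) ℝ) (hA : A = F + N * Ω)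
    (V₀ : Submodule ℝ ((Fin n ⊕ Fin n) → ℝ))
    (hV₀ : V₀ = Submodule.span ℝ
      (Set.range (fun k => fun i => (l k i).re) ∪ Set.range (fun k => fun i => (l k i).im)))
    (V : ℕ → Submodule ℝ ((Fin n ⊕ Fin n) → ℝ))
    (hV : ∀ j : ℕ, V j = ⨆ m ∈ Finset.range (j + 1), Submodule.map (F ^ m).mulVecLin V₀)
    (R : ℝ → Matrix (Fin n ⊕ Fin n) (Fin n ⊕ Fin n) ℝ)
    (hR : ∀ t, R t = NormedSpace.exp (t • A))
    (D : ℝ → Matrix (Fin n ⊕ Fin n) (Fin n ⊕ Fin n) ℝ)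
    (hD : ∀ t, D t = Matrix.of fun i j => ∫ s in (0:ℝ)..t, (R s * M * (R s)ᵀ) i j)
    (k : ℕ)
    (ξ : (Fin n ⊕ Fin n) → ℝ)
    (hξ : ∀ j : ℕ, j ≤ 2 * k + 1 →
      iteratedDeriv j (fun t => ξ ⬝ᵥ (D t).mulVec ξ) 0 = 0) :
    ∀ v ∈ V k, ξ ⬝ᵥ v = 0 := by
  -- abbreviations: `a k' = Re (l k')`, `b k' = Im (l k')`
  -- Step 1: expansion of the quadratic form of `R s * M * (R s)ᵀ`
  have hentry : ∀ (ζ η : (Fin n ⊕ Fin n) → ℝ) (s : ℝ),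
      ζ ⬝ᵥ (R s * M * (R s)ᵀ) *ᵥ η
        = ∑ k', (gfun A ζ (fun i => (l k' i).re) s * gfun A η (fun i => (l k' i).re) s
            + gfun A ζ (fun i => (l k' i).im) s * gfun A η (fun i => (l k' i).im) s) := by
    intro ζ η s
    rw [hR, hM, Finset.mul_sum, Finset.sum_mul]
    have h0 : ∀ X : Matrix (Fin n ⊕ Fin n) (Fin n ⊕ Fin n) ℝ,
        ζ ⬝ᵥ X *ᵥ η = Lmap ζ η X := fun _ => rfl
    rw [h0, map_sum]
    refine Finset.sum_congr rfl fun k' _ => ?_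
    rw [mul_add, add_mul, map_add, ← h0, ← h0, dot_vecMulVec_expand, dot_vecMulVec_expand]
    rfl
  -- Step 2: the derivative integrand φ
  set φ : ℝ → ℝ := fun t => ∑ k',
      (gfun A ξ (fun i => (l k' i).re) t * gfun A ξ (fun i => (l k' i).re) t
        + gfun A ξ (fun i => (l k' i).im) t * gfun A ξ (fun i => (l k' i).im) t) with hφ
  have hφsmooth : ContDiff ℝ ⊤ φ := by
    apply ContDiff.sum
    intro k' _
    exact ((gfun_smooth A ξ _).mul (gfun_smooth A ξ _)).add
      ((gfun_smooth A ξ _).mul (gfun_smooth A ξ _))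
  have hφcont : Continuous φ := hφsmooth.continuous
  -- continuity of entries
  have hHc : ∀ i j, Continuous (fun s => (R s * M * (R s)ᵀ) i j) := by
    intro i j
    have h1 : (fun s => (R s * M * (R s)ᵀ) i j)
        = fun s => Pi.single i (1:ℝ) ⬝ᵥ (R s * M * (R s)ᵀ) *ᵥ Pi.single j (1:ℝ) := by
      funext s
      rw [Matrix.mulVec_single, single_dotProduct]
      simp
    rw [h1]
    have h2 : (fun s => Pi.single i (1:ℝ) ⬝ᵥ (R s * M * (R s)ᵀ) *ᵥ Pi.single j (1:ℝ))
        = fun s => ∑ k', (gfun A (Pi.single i 1) (fun i' => (l k' i').re) s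
              * gfun A (Pi.single j 1) (fun i' => (l k' i').re) s
            + gfun A (Pi.single i 1) (fun i' => (l k' i').im) s
              * gfun A (Pi.single j 1) (fun i' => (l k' i').im) s) := by
      funext s; exact hentry _ _ s
    rw [h2]
    exact continuous_finset_sum _ fun k' _ =>
      (((gfun_smooth A _ _).continuous.mul (gfun_smooth A _ _).continuous).add
        ((gfun_smooth A _ _).continuous.mul (gfun_smooth A _ _).continuous))
  -- Step 3: D-quadratic form as an integral of φ
  have hfint : (fun t => ξ ⬝ᵥ (D t).mulVec ξ) = fun t => ∫ s in (0:ℝ)..t, φ s := by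
    funext t
    rw [hD t]
    have lhs_eq : ξ ⬝ᵥ (Matrix.of fun i j =>
          ∫ s in (0:ℝ)..t, (R s * M * (R s)ᵀ) i j).mulVec ξ
        = ∑ i, ξ i * ∑ j, (∫ s in (0:ℝ)..t, (R s * M * (R s)ᵀ) i j) * ξ j := rfl
    rw [lhs_eq]
    have key : ∀ i, ξ i * ∑ j, (∫ s in (0:ℝ)..t, (R s * M * (R s)ᵀ) i j) * ξ j
        = ∫ s in (0:ℝ)..t, ξ i * ∑ j, (R s * M * (R s)ᵀ) i j * ξ j := by
      intro i
      have e1 : ∀ j : Fin n ⊕ Fin n, (∫ s in (0:ℝ)..t, (R s * M * (R s)ᵀ) i j) * ξ j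
          = ∫ s in (0:ℝ)..t, (R s * M * (R s)ᵀ) i j * ξ j := fun j =>
        (intervalIntegral.integral_mul_const (ξ j) _).symm
      rw [Finset.sum_congr rfl fun j _ => e1 j,
        ← intervalIntegral.integral_finset_sum (f := fun j s => (R s * M * (R s)ᵀ) i j * ξ j)
          (fun j _ => (((hHc i j).mul continuous_const : Continuous fun s => (R s * M * (R s)ᵀ) i j * ξ j)).intervalIntegrable _ _),
        ← intervalIntegral.integral_const_mul]
    rw [Finset.sum_congr rfl fun i _ => key i,
      ← intervalIntegral.integral_finset_sum (f := fun i s => ξ i * ∑ j, (R s * M * (R s)ᵀ) i j * ξ j)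
        (fun i _ => ((continuous_const.mul (continuous_finset_sum _
          fun j _ => (hHc i j).mul continuous_const) : Continuous fun s => ξ i * ∑ j, (R s * M * (R s)ᵀ) i j * ξ j)).intervalIntegrable _ _)]
    congr 1
    funext s
    rw [hφ]
    beta_reduce
    rw [← hentry ξ ξ s]
    rfl
  -- Step 4: derivative of the quadratic form is φ
  have hderiv : deriv (fun t => ξ ⬝ᵥ (D t).mulVec ξ) = φ := by
    rw [hfint]
    funext t
    exact Continuous.deriv_integral φ hφcont 0 t
  -- Step 5: vanishing of derivatives of φ at 0
  have hvan : ∀ N : ℕ, N ≤ 2 * k → iteratedDeriv N φ 0 = 0 := by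
    intro N hNk
    have h := hξ (N + 1) (by omega)
    rwa [iteratedDeriv_succ', hderiv] at h
  -- Step 6: explicit formula for iterated derivatives of φ at 0
  have hiter : ∀ Nn : ℕ, iteratedDeriv Nn φ 0
      = ∑ k', ((∑ i ∈ Finset.range (Nn + 1), (Nn.choose i : ℝ) *
            ((ξ ⬝ᵥ (A ^ i) *ᵥ (fun i' => (l k' i').re))
              * (ξ ⬝ᵥ (A ^ (Nn - i)) *ᵥ (fun i' => (l k' i').re))))
        + ∑ i ∈ Finset.range (Nn + 1), (Nn.choose i : ℝ) *
            ((ξ ⬝ᵥ (A ^ i) *ᵥ (fun i' => (l k' i').im))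
              * (ξ ⬝ᵥ (A ^ (Nn - i)) *ᵥ (fun i' => (l k' i').im)))) := by
    intro Nn
    rw [hφ]
    rw [iteratedDeriv_sum'' Finset.univ
      (fun k' => fun t => gfun A ξ (fun i => (l k' i).re) t * gfun A ξ (fun i => (l k' i).re) t
        + gfun A ξ (fun i => (l k' i).im) t * gfun A ξ (fun i => (l k' i).im) t)
      (fun k' _ => ((gfun_smooth A ξ _).mul (gfun_smooth A ξ _)).add
        ((gfun_smooth A ξ _).mul (gfun_smooth A ξ _))) Nn]
    refine Finset.sum_congr rfl fun k' _ => ?_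
    rw [iteratedDeriv_add''
      ((gfun_smooth A ξ (fun i => (l k' i).re)).mul (gfun_smooth A ξ (fun i => (l k' i).re)))
      ((gfun_smooth A ξ (fun i => (l k' i).im)).mul (gfun_smooth A ξ (fun i => (l k' i).im))) Nn]
    rw [gfun_mul_iteratedDeriv A ξ Nn (fun i => (l k' i).re) (fun i => (l k' i).re),
      gfun_mul_iteratedDeriv A ξ Nn (fun i => (l k' i).im) (fun i => (l k' i).im)]
    simp only [gfun_zero_eval]
  -- Step 7: the main strong induction
  have key : ∀ mm : ℕ, mm ≤ k → ∀ k' : Fin K,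
      ξ ⬝ᵥ (A ^ mm) *ᵥ (fun i' => (l k' i').re) = 0
        ∧ ξ ⬝ᵥ (A ^ mm) *ᵥ (fun i' => (l k' i').im) = 0 := by
    intro mm
    induction mm using Nat.strong_induction_on with
    | _ mm IH =>
      intro hmm k'
      have h0 := hvan (2 * mm) (by omega)
      rw [hiter (2 * mm)] at h0
      have hcol : ∀ w : (Fin n ⊕ Fin n) → ℝ, (∀ i, i < mm → ξ ⬝ᵥ (A ^ i) *ᵥ w = 0) →
          ∑ i ∈ Finset.range (2 * mm + 1), ((2 * mm).choose i : ℝ) *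
            ((ξ ⬝ᵥ (A ^ i) *ᵥ w) * (ξ ⬝ᵥ (A ^ (2 * mm - i)) *ᵥ w))
          = ((2 * mm).choose mm : ℝ) * ((ξ ⬝ᵥ (A ^ mm) *ᵥ w) * (ξ ⬝ᵥ (A ^ mm) *ᵥ w)) := by
        intro w hw
        have hmem : mm ∈ Finset.range (2 * mm + 1) := by
          rw [Finset.mem_range]; omega
        have hsingle := Finset.sum_eq_single_of_mem mm hmem
          (f := fun i => ((2 * mm).choose i : ℝ) *
            ((ξ ⬝ᵥ (A ^ i) *ᵥ w) * (ξ ⬝ᵥ (A ^ (2 * mm - i)) *ᵥ w)))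
          (by
            intro i hi hne
            beta_reduce
            rcases lt_or_gt_of_ne hne with h | h
            · rw [hw i h]; ring
            · have hlt : 2 * mm - i < mm := by
                rw [Finset.mem_range] at hi; omega
              rw [hw _ hlt]; ring)
        beta_reduce at hsingle
        rw [hsingle]
        have h2m : 2 * mm - mm = mm := by omega
        rw [h2m]
      have hIH : ∀ i, i < mm → ∀ k'' : Fin K,
          ξ ⬝ᵥ (A ^ i) *ᵥ (fun i' => (l k'' i').re) = 0
            ∧ ξ ⬝ᵥ (A ^ i) *ᵥ (fun i' => (l k'' i').im) = 0 :=
        fun i hi => IH i hi (by omega)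
      rw [Finset.sum_congr rfl (fun k'' _ => by
        rw [hcol _ (fun i hi => (hIH i hi k'').1), hcol _ (fun i hi => (hIH i hi k'').2)])] at h0
      have hC : (0:ℝ) < ((2 * mm).choose mm : ℝ) := by
        exact_mod_cast Nat.choose_pos (by omega)
      have hnn : ∀ k'' ∈ (Finset.univ : Finset (Fin K)),
          (0:ℝ) ≤ ((2 * mm).choose mm : ℝ) *
              ((ξ ⬝ᵥ (A ^ mm) *ᵥ (fun i' => (l k'' i').re)) * (ξ ⬝ᵥ (A ^ mm) *ᵥ (fun i' => (l k'' i').re)))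
            + ((2 * mm).choose mm : ℝ) *
              ((ξ ⬝ᵥ (A ^ mm) *ᵥ (fun i' => (l k'' i').im)) * (ξ ⬝ᵥ (A ^ mm) *ᵥ (fun i' => (l k'' i').im))) := by
        intro k'' _
        have := mul_self_nonneg (ξ ⬝ᵥ (A ^ mm) *ᵥ (fun i' => (l k'' i').re))
        have := mul_self_nonneg (ξ ⬝ᵥ (A ^ mm) *ᵥ (fun i' => (l k'' i').im))
        nlinarith
      have hzero := (Finset.sum_eq_zero_iff_of_nonneg hnn).mp h0 k' (Finset.mem_univ k')
      have hre : (ξ ⬝ᵥ (A ^ mm) *ᵥ (fun i' => (l k' i').re))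
          * (ξ ⬝ᵥ (A ^ mm) *ᵥ (fun i' => (l k' i').re)) = 0 := by
        have := mul_self_nonneg (ξ ⬝ᵥ (A ^ mm) *ᵥ (fun i' => (l k' i').re))
        have := mul_self_nonneg (ξ ⬝ᵥ (A ^ mm) *ᵥ (fun i' => (l k' i').im))
        nlinarith
      have him : (ξ ⬝ᵥ (A ^ mm) *ᵥ (fun i' => (l k' i').im))
          * (ξ ⬝ᵥ (A ^ mm) *ᵥ (fun i' => (l k' i').im)) = 0 := by
        have := mul_self_nonneg (ξ ⬝ᵥ (A ^ mm) *ᵥ (fun i' => (l k' i').re))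
        have := mul_self_nonneg (ξ ⬝ᵥ (A ^ mm) *ᵥ (fun i' => (l k' i').im))
        nlinarith
      exact ⟨mul_self_eq_zero.mp hre, mul_self_eq_zero.mp him⟩
  -- Step 8: ξ is perpendicular to Aⁱ V₀ for i ≤ k
  have hAperp : ∀ i : ℕ, i ≤ k → V₀ ≤ LinearMap.ker (dotMulLin ξ (A ^ i)) := by
    intro i hik
    rw [hV₀, Submodule.span_le]
    rintro w (⟨k', rfl⟩ | ⟨k', rfl⟩)
    · exact LinearMap.mem_ker.mpr ((key i hik k').1)
    · exact LinearMap.mem_ker.mpr ((key i hik k').2)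
  -- N * Ω maps everything into V₀
  have hNrange : ∀ u : (Fin n ⊕ Fin n) → ℝ, (N * Ω) *ᵥ u ∈ V₀ := by
    intro u
    rw [← Matrix.mulVec_mulVec, hN, sum_mulVec']
    apply Submodule.sum_mem
    intro k' _
    rw [sub_mulVec, vecMulVec_mulVec', vecMulVec_mulVec', hV₀]
    refine Submodule.sub_mem _ ?_ ?_
    · exact Submodule.smul_mem _ _ (Submodule.subset_span (Or.inl ⟨k', rfl⟩))
    · exact Submodule.smul_mem _ _ (Submodule.subset_span (Or.inr ⟨k', rfl⟩))
  -- Step 9: Fᵐ V₀ is contained in the span of the Aⁱ V₀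
  have hWm : ∀ mm : ℕ, mm ≤ k → Submodule.map (F ^ mm).mulVecLin V₀ ≤
      ⨆ i ∈ Finset.range (mm + 1), Submodule.map ((A ^ i).mulVecLin) V₀ := by
    intro mm
    induction mm with
    | zero =>
      intro _
      have h0 : Submodule.map ((F : Matrix (Fin n ⊕ Fin n) (Fin n ⊕ Fin n) ℝ) ^ 0).mulVecLin V₀
          = Submodule.map ((A ^ 0).mulVecLin) V₀ := by
        simp [pow_zero, Matrix.mulVecLin_one, Submodule.map_id]
      rw [h0]
      exact le_iSup₂ (f := fun i (_ : i ∈ Finset.range 1) => Submodule.map ((A ^ i).mulVecLin) V₀)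
        0 (by simp)
    | succ mm ih =>
      intro hmk
      have step : Submodule.map (F ^ (mm + 1)).mulVecLin V₀
          = Submodule.map F.mulVecLin (Submodule.map (F ^ mm).mulVecLin V₀) := by
        rw [pow_succ', Matrix.mulVecLin_mul, Submodule.map_comp]
      rw [step]
      refine le_trans (Submodule.map_mono (ih (by omega))) ?_
      rw [Submodule.map_iSup]
      refine iSup_le fun i => ?_
      rw [Submodule.map_iSup]
      refine iSup_le fun hi => ?_
      rintro x ⟨y, ⟨w, hw, rfl⟩, rfl⟩
      have hFAN : F = A - N * Ω := by rw [hA, add_sub_cancel_right]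
      have hx : F.mulVecLin ((A ^ i).mulVecLin w)
          = A *ᵥ ((A ^ i) *ᵥ w) - (N * Ω) *ᵥ ((A ^ i) *ᵥ w) := by
        rw [hFAN]
        simp [Matrix.mulVecLin_apply, Matrix.sub_mul, Matrix.sub_mulVec, Matrix.mulVec_mulVec, Matrix.mul_assoc]
      rw [hx]
      apply Submodule.sub_mem
      · have hAv : A *ᵥ ((A ^ i) *ᵥ w) = (A ^ (i + 1)) *ᵥ w := by
          rw [Matrix.mulVec_mulVec, ← pow_succ']
        rw [hAv]
        have hi2 : i + 1 ∈ Finset.range (mm + 1 + 1) := by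
          rw [Finset.mem_range] at hi ⊢; omega
        exact le_iSup₂ (f := fun j (_ : j ∈ Finset.range (mm + 1 + 1)) =>
          Submodule.map ((A ^ j).mulVecLin) V₀) (i + 1) hi2 ⟨w, hw, rfl⟩
      · have hmemV₀ := hNrange ((A ^ i) *ᵥ w)
        have h0r : (0:ℕ) ∈ Finset.range (mm + 1 + 1) := by simp
        have hV0eq : Submodule.map ((A ^ (0:ℕ)).mulVecLin) V₀ = V₀ := by
          simp [pow_zero, Matrix.mulVecLin_one, Submodule.map_id]
        refine le_iSup₂ (f := fun j (_ : j ∈ Finset.range (mm + 1 + 1)) =>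
          Submodule.map ((A ^ j).mulVecLin) V₀) 0 h0r ?_
        beta_reduce
        rw [hV0eq]
        exact hmemV₀
  -- Step 10: conclusion
  intro v hv
  rw [hV k] at hv
  have hVW : (⨆ mm ∈ Finset.range (k + 1), Submodule.map (F ^ mm).mulVecLin V₀)
      ≤ LinearMap.ker (dotMulLin ξ (1 : Matrix (Fin n ⊕ Fin n) (Fin n ⊕ Fin n) ℝ)) := by
    refine iSup_le fun mm => iSup_le fun hmm => ?_
    have hmmk : mm ≤ k := by rw [Finset.mem_range] at hmm; omega
    refine le_trans (hWm mm hmmk) ?_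
    refine iSup_le fun i => iSup_le fun hi => ?_
    have hik : i ≤ k := by rw [Finset.mem_range] at hi; omega
    rintro x ⟨w, hw, rfl⟩
    have hker := hAperp i hik hw
    rw [LinearMap.mem_ker] at hker ⊢
    have : dotMulLin ξ (1 : Matrix (Fin n ⊕ Fin n) (Fin n ⊕ Fin n) ℝ) ((A ^ i).mulVecLin w)
        = dotMulLin ξ (A ^ i) w := by
      show ξ ⬝ᵥ (1 : Matrix (Fin n ⊕ Fin n) (Fin n ⊕ Fin n) ℝ) *ᵥ ((A ^ i) *ᵥ w)
        = ξ ⬝ᵥ (A ^ i) *ᵥ w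
      rw [Matrix.one_mulVec]
    rw [this, hker]
  have hfin := hVW hv
  rw [LinearMap.mem_ker] at hfin
  have : dotMulLin ξ (1 : Matrix (Fin n ⊕ Fin n) (Fin n ⊕ Fin n) ℝ) v = ξ ⬝ᵥ v := by
    show ξ ⬝ᵥ (1 : Matrix (Fin n ⊕ Fin n) (Fin n ⊕ Fin n) ℝ) *ᵥ v = ξ ⬝ᵥ v
    rw [Matrix.one_mulVec]
  rw [← this, hfin]
end

section
/- Let j ≥ 1 and let ξ ∈ ℝ^{2n} be orthogonal to V_{j−1}. Then the vector C_t ξ is of order t^{j+1} for short times: there exist c, t₀ > 0 such that ‖C_t ξ‖ ≤ c·t^{j+1} for all 0 ≤ t ≤ t₀. -/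
open Matrix MeasureTheory intervalIntegral

open NormedSpace

section aux
attribute [local instance] Matrix.normedAddCommGroup Matrix.normedSpace

variable {ι : Type*} [Fintype ι] [DecidableEq ι]

lemma aux_mulVec_norm_le (B : Matrix ι ι ℝ) (x : ι → ℝ) :
    ‖B.mulVec x‖ ≤ (Fintype.card ι) * ‖B‖ * ‖x‖ := by
  have h0 : (0:ℝ) ≤ (Fintype.card ι) * ‖B‖ * ‖x‖ := by positivity
  rw [pi_norm_le_iff_of_nonneg h0]
  intro i
  calc ‖B.mulVec x i‖ = ‖∑ p, B i p * x p‖ := rfl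
    _ ≤ ∑ p, ‖B i p * x p‖ := norm_sum_le _ _
    _ ≤ ∑ _p : ι, ‖B‖ * ‖x‖ := by
        refine Finset.sum_le_sum fun p _ => ?_
        rw [norm_mul]
        exact mul_le_mul (Matrix.norm_entry_le_entrywise_sup_norm B)
          (norm_le_pi_norm x p) (norm_nonneg _) (norm_nonneg _)
    _ = (Fintype.card ι) * ‖B‖ * ‖x‖ := by
        rw [Finset.sum_const, Finset.card_univ, nsmul_eq_mul, mul_assoc]

lemma aux_mul_norm_le (A B : Matrix ι ι ℝ) :
    ‖A * B‖ ≤ (Fintype.card ι) * ‖A‖ * ‖B‖ := by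
  have h0 : (0:ℝ) ≤ (Fintype.card ι) * ‖A‖ * ‖B‖ := by positivity
  rw [Matrix.norm_le_iff h0]
  intro i j
  calc ‖(A * B) i j‖ = ‖∑ p, A i p * B p j‖ := by rw [Matrix.mul_apply]
    _ ≤ ∑ p, ‖A i p * B p j‖ := norm_sum_le _ _
    _ ≤ ∑ _p : ι, ‖A‖ * ‖B‖ := by
        refine Finset.sum_le_sum fun p _ => ?_
        rw [norm_mul]
        exact mul_le_mul (Matrix.norm_entry_le_entrywise_sup_norm A)
          (Matrix.norm_entry_le_entrywise_sup_norm B) (norm_nonneg _) (norm_nonneg _)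
    _ = (Fintype.card ι) * ‖A‖ * ‖B‖ := by
        rw [Finset.sum_const, Finset.card_univ, nsmul_eq_mul, mul_assoc]

lemma aux_norm_pow_le (A : Matrix ι ι ℝ) (m : ℕ) :
    ‖A ^ m‖ ≤ ((Fintype.card ι) * ‖A‖ + 1) ^ m := by
  induction m with
  | zero =>
    simp only [pow_zero]
    have : ‖(1 : Matrix ι ι ℝ)‖ ≤ 1 := by
      rw [Matrix.norm_le_iff zero_le_one]
      intro i j
      by_cases h : i = j <;> simp [Matrix.one_apply, h]
    simpa using this
  | succ m ih =>
    have hb : (0:ℝ) ≤ (Fintype.card ι) * ‖A‖ + 1 := by positivity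
    calc ‖A ^ (m+1)‖ = ‖A ^ m * A‖ := by rw [pow_succ]
      _ ≤ (Fintype.card ι) * ‖A ^ m‖ * ‖A‖ := aux_mul_norm_le _ _
      _ = ‖A ^ m‖ * ((Fintype.card ι) * ‖A‖) := by ring
      _ ≤ ((Fintype.card ι) * ‖A‖ + 1) ^ m * ((Fintype.card ι) * ‖A‖ + 1) := by
          refine mul_le_mul ih (by linarith) (by positivity) (by positivity)
      _ = ((Fintype.card ι) * ‖A‖ + 1) ^ (m+1) := by rw [pow_succ]

lemma aux_summable (A : Matrix ι ι ℝ) (u : ℝ) :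
    Summable fun m : ℕ => ((m.factorial : ℝ)⁻¹ * u ^ m) • A ^ m := by
  set b : ℝ := (Fintype.card ι) * ‖A‖ + 1 with hb
  have hb0 : (0:ℝ) ≤ b := by positivity
  refine Summable.of_norm_bounded (g := fun m => (|u| * b) ^ m / m.factorial) ?_ ?_
  · exact Real.summable_pow_div_factorial _
  · intro m
    rw [norm_smul]
    calc ‖(m.factorial : ℝ)⁻¹ * u ^ m‖ * ‖A ^ m‖
        ≤ ((m.factorial : ℝ)⁻¹ * |u| ^ m) * b ^ m := by
          refine mul_le_mul ?_ (aux_norm_pow_le A m) (norm_nonneg _) (by positivity)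
          rw [norm_mul, norm_inv, norm_pow, Real.norm_natCast, Real.norm_eq_abs]
      _ = (|u| * b) ^ m / m.factorial := by rw [mul_pow]; ring
section aux
set_option linter.unusedSectionVars false
attribute [local instance] Matrix.normedAddCommGroup Matrix.normedSpace

variable {ι : Type*} [Fintype ι] [DecidableEq ι]

lemma aux_exp_tsum (A : Matrix ι ι ℝ) (u : ℝ) :
    exp (u • A) = ∑' m : ℕ, ((m.factorial : ℝ)⁻¹ * u ^ m) • A ^ m := by
  rw [NormedSpace.exp_eq_tsum (𝕂 := ℝ)]
  exact tsum_congr fun m => by rw [smul_pow, smul_smul]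


-- linear map sending B to M'.mulVec (B.mulVec ξ)
noncomputable def auxL (M' : Matrix ι ι ℝ) (ξ : ι → ℝ) : Matrix ι ι ℝ →ₗ[ℝ] (ι → ℝ) where
  toFun B := M'.mulVec (B.mulVec ξ)
  map_add' B₁ B₂ := by
    show M' *ᵥ ((B₁ + B₂) *ᵥ ξ) = _
    rw [Matrix.add_mulVec, Matrix.mulVec_add]
  map_smul' c B := by
    show M' *ᵥ ((c • B) *ᵥ ξ) = _
    rw [Matrix.smul_mulVec, Matrix.mulVec_smul, RingHom.id_apply]

lemma aux_exp_apply_tsum (A M' : Matrix ι ι ℝ) (ξ : ι → ℝ) (u : ℝ) :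
    M'.mulVec ((exp (u • A)).mulVec ξ)
      = ∑' m : ℕ, ((m.factorial : ℝ)⁻¹ * u ^ m) • M'.mulVec ((A ^ m).mulVec ξ) := by
  have hL : Continuous (auxL M' ξ) := LinearMap.continuous_of_finiteDimensional _
  have := ContinuousLinearMap.map_tsum
    ⟨auxL M' ξ, hL⟩ (aux_summable A u)
  rw [aux_exp_tsum A u]
  refine this.trans (tsum_congr fun m => ?_)
  simp [auxL, Matrix.smul_mulVec, Matrix.mulVec_smul]

lemma aux_exp_continuous (A : Matrix ι ι ℝ) : Continuous fun u : ℝ => exp (u • A) := by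
  letI : SeminormedRing (Matrix ι ι ℝ) := Matrix.linftyOpSemiNormedRing
  letI : NormedRing (Matrix ι ι ℝ) := Matrix.linftyOpNormedRing
  letI : NormedAlgebra ℝ (Matrix ι ι ℝ) := Matrix.linftyOpNormedAlgebra
  letI : NormedAlgebra ℚ (Matrix ι ι ℝ) := Matrix.linftyOpNormedAlgebra
  exact (@NormedSpace.exp_continuous _ _ _ (FiniteDimensional.complete ℝ _)).comp (continuous_id.smul continuous_const)

lemma aux_exp_norm_le (A : Matrix ι ι ℝ) (u : ℝ) (hu : |u| ≤ 1) :
    ‖exp (u • A)‖ ≤ ∑' m : ℕ, ((Fintype.card ι * ‖A‖ + 1) ^ m / m.factorial : ℝ) := by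
  set b : ℝ := Fintype.card ι * ‖A‖ + 1 with hbdef
  have hb0 : (0:ℝ) ≤ b := by positivity
  have hbd : ∀ m : ℕ, ‖((m.factorial : ℝ)⁻¹ * u ^ m) • A ^ m‖ ≤ b ^ m / m.factorial := by
    intro m
    rw [norm_smul, norm_mul, norm_inv, norm_pow, Real.norm_natCast, Real.norm_eq_abs]
    calc (m.factorial : ℝ)⁻¹ * |u| ^ m * ‖A ^ m‖
        ≤ (m.factorial : ℝ)⁻¹ * 1 * b ^ m := by
          refine mul_le_mul (by
            refine mul_le_mul le_rfl (pow_le_one₀ (abs_nonneg u) hu) (by positivity) (by positivity))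
            (aux_norm_pow_le A m) (norm_nonneg _) (by positivity)
      _ = b ^ m / m.factorial := by ring
  have hsum : Summable fun m : ℕ => ‖((m.factorial : ℝ)⁻¹ * u ^ m) • A ^ m‖ :=
    Summable.of_nonneg_of_le (fun m => norm_nonneg _) hbd
      (by simpa using Real.summable_pow_div_factorial b)
  rw [aux_exp_tsum A u]
  calc ‖∑' m : ℕ, ((m.factorial : ℝ)⁻¹ * u ^ m) • A ^ m‖
      ≤ ∑' m : ℕ, ‖((m.factorial : ℝ)⁻¹ * u ^ m) • A ^ m‖ := norm_tsum_le_tsum_norm hsum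
    _ ≤ ∑' m : ℕ, (b ^ m / m.factorial : ℝ) :=
        Summable.tsum_le_tsum hbd hsum (by simpa using Real.summable_pow_div_factorial b)

lemma aux_exp_mulVec_bound (A : Matrix ι ι ℝ) :
    ∃ cE : ℝ, 0 < cE ∧ ∀ u : ℝ, |u| ≤ 1 → ∀ x : ι → ℝ,
      ‖(exp (u • A)).mulVec x‖ ≤ cE * ‖x‖ := by
  set b : ℝ := Fintype.card ι * ‖A‖ + 1 with hbdef
  set S : ℝ := ∑' m : ℕ, (b ^ m / m.factorial : ℝ) with hSdef
  have hS0 : 0 ≤ S := tsum_nonneg fun m => by positivity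
  refine ⟨Fintype.card ι * S + 1, by positivity, fun u hu x => ?_⟩
  calc ‖(exp (u • A)).mulVec x‖
      ≤ Fintype.card ι * ‖exp (u • A)‖ * ‖x‖ := aux_mulVec_norm_le _ _
    _ ≤ (Fintype.card ι * S + 1) * ‖x‖ := by
        refine mul_le_mul ?_ le_rfl (norm_nonneg _) (by positivity)
        have := aux_exp_norm_le A u hu
        nlinarith [Fintype.card ι |>.cast_nonneg (α := ℝ)]

lemma aux_key (A M' : Matrix ι ι ℝ) (ξ : ι → ℝ) (j : ℕ)
    (hvan : ∀ m < j, M'.mulVec ((A ^ m).mulVec ξ) = 0) :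
    ∃ c₁ : ℝ, 0 < c₁ ∧ ∀ u : ℝ, |u| ≤ 1 →
      ‖M'.mulVec ((exp (u • A)).mulVec ξ)‖ ≤ c₁ * |u| ^ j := by
  set d : ℝ := (Fintype.card ι : ℝ) with hddef
  have hd0 : (0:ℝ) ≤ d := Nat.cast_nonneg _
  set b : ℝ := d * ‖A‖ + 1 with hbdef
  have hb0 : (0:ℝ) ≤ b := by positivity
  set c₂ : ℝ := d * ‖M'‖ * (d * ‖ξ‖) + 1 with hc2def
  have hc20 : (0:ℝ) < c₂ := by positivity
  set S : ℝ := ∑' m : ℕ, (b ^ m / m.factorial : ℝ) with hSdef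
  have hS0 : 0 ≤ S := tsum_nonneg fun m => by positivity
  refine ⟨c₂ * S + 1, by positivity, fun u hu => ?_⟩
  rw [aux_exp_apply_tsum A M' ξ u]
  set f : ℕ → ι → ℝ :=
    fun m => ((m.factorial : ℝ)⁻¹ * u ^ m) • M'.mulVec ((A ^ m).mulVec ξ) with hfdef
  have hMz : ∀ m : ℕ, ‖M'.mulVec ((A ^ m).mulVec ξ)‖ ≤ c₂ * b ^ m := by
    intro m
    calc ‖M'.mulVec ((A ^ m).mulVec ξ)‖
        ≤ d * ‖M'‖ * ‖(A ^ m).mulVec ξ‖ := aux_mulVec_norm_le _ _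
      _ ≤ d * ‖M'‖ * (d * ‖A ^ m‖ * ‖ξ‖) := by
          refine mul_le_mul_of_nonneg_left (aux_mulVec_norm_le _ _) (by positivity)
      _ ≤ c₂ * b ^ m := by
          have h1 : ‖A ^ m‖ ≤ b ^ m := by
            simpa [hbdef, hddef] using aux_norm_pow_le A m
          have h2 : (0:ℝ) ≤ ‖A ^ m‖ := norm_nonneg _
          nlinarith [norm_nonneg M', norm_nonneg ξ, pow_nonneg hb0 m,
            mul_le_mul_of_nonneg_left h1 (mul_nonneg (mul_nonneg hd0 (norm_nonneg M'))
              (mul_nonneg hd0 (norm_nonneg ξ)))]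
  have hfb : ∀ m : ℕ, ‖f m‖ ≤ |u| ^ j * (c₂ * (b ^ m / m.factorial)) := by
    intro m
    by_cases hm : m < j
    · have h0 : f m = 0 := by rw [hfdef]; dsimp only; rw [hvan m hm, smul_zero]
      rw [h0, norm_zero]
      positivity
    · push_neg at hm
      rw [hfdef]
      rw [norm_smul, norm_mul, norm_inv, norm_pow, Real.norm_natCast, Real.norm_eq_abs]
      have hup : |u| ^ m ≤ |u| ^ j := pow_le_pow_of_le_one (abs_nonneg u) hu hm
      calc (m.factorial : ℝ)⁻¹ * |u| ^ m * ‖M'.mulVec ((A ^ m).mulVec ξ)‖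
          ≤ (m.factorial : ℝ)⁻¹ * |u| ^ j * (c₂ * b ^ m) := by
            have hfac : (0:ℝ) < (m.factorial : ℝ) := Nat.cast_pos.mpr m.factorial_pos
            refine mul_le_mul (by
              refine mul_le_mul le_rfl hup (by positivity) (by positivity))
              (hMz m) (norm_nonneg _) (by positivity)
        _ = |u| ^ j * (c₂ * (b ^ m / m.factorial)) := by ring
  have hgsum : Summable fun m : ℕ => |u| ^ j * (c₂ * (b ^ m / m.factorial)) :=
    ((Real.summable_pow_div_factorial b).mul_left c₂).mul_left _
  have hfsum : Summable fun m : ℕ => ‖f m‖ :=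
    Summable.of_nonneg_of_le (fun m => norm_nonneg _) hfb hgsum
  calc ‖∑' m, f m‖ ≤ ∑' m, ‖f m‖ := norm_tsum_le_tsum_norm hfsum
    _ ≤ ∑' m : ℕ, |u| ^ j * (c₂ * (b ^ m / m.factorial)) := Summable.tsum_le_tsum hfb hfsum hgsum
    _ = |u| ^ j * (c₂ * S) := by
        rw [tsum_mul_left, tsum_mul_left]
    _ ≤ (c₂ * S + 1) * |u| ^ j := by
        rw [mul_comm]
        refine mul_le_mul (by linarith) le_rfl (by positivity) (by positivity)

end aux

section auxNoNorm
variable {ι : Type*} [Fintype ι] [DecidableEq ι]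

lemma aux_sum_mulVec {κ : Type*} (s : Finset κ) (f : κ → Matrix ι ι ℝ) (y : ι → ℝ) :
    (∑ k ∈ s, f k).mulVec y = ∑ k ∈ s, (f k).mulVec y := by
  ext i
  simp only [Matrix.mulVec, dotProduct, Matrix.sum_apply, Finset.sum_apply, Finset.sum_mul]
  rw [Finset.sum_comm]

lemma aux_vecMulVec_mulVec (a b y : ι → ℝ) :
    (vecMulVec a b).mulVec y = (b ⬝ᵥ y) • a := by
  ext i
  show ∑ p, (a i * b p) * y p = (∑ p, b p * y p) * a i
  rw [Finset.sum_mul]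
  exact Finset.sum_congr rfl fun p _ => by ring

end auxNoNorm

/-- if `ξ ⊥ V_{j-1}` (j ≥ 1), the vector `C_t ξ` is of order `t^{j+1}`
for short times: there are `c, t₀ > 0` with `‖C_t ξ‖ ≤ c t^{j+1}` for `0 ≤ t ≤ t₀`. -/
theorem Ct_vector_short_time_order (n K : ℕ) (hn : 1 ≤ n)
    (Ω : Matrix (Fin n ⊕ Fin n) (Fin n ⊕ Fin n) ℝ)
    (hΩ : Ω = Matrix.fromBlocks 0 (-1) 1 0)
    (Q : Matrix (Fin n ⊕ Fin n) (Fin n ⊕ Fin n) ℝ) (hQ : Q.IsSymm)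
    (F : Matrix (Fin n ⊕ Fin n) (Fin n ⊕ Fin n) ℝ) (hF : F = Ω * Q)
    (l : Fin K → (Fin n ⊕ Fin n) → ℂ)
    (M : Matrix (Fin n ⊕ Fin n) (Fin n ⊕ Fin n) ℝ)
    (hM : M = ∑ k, (vecMulVec (fun i => (l k i).re) (fun i => (l k i).re)
                  + vecMulVec (fun i => (l k i).im) (fun i => (l k i).im)))
    (N : Matrix (Fin n ⊕ Fin n) (Fin n ⊕ Fin n) ℝ)
    (hN : N = ∑ k, (vecMulVec (fun i => (l k i).re) (fun i => (l k i).im)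
                  - vecMulVec (fun i => (l k i).im) (fun i => (l k i).re)))
    (A : Matrix (Fin n ⊕ Fin n) (Fin n ⊕ Fin n) ℝ) (hA : A = F + N * Ω)
    (V₀ : Submodule ℝ ((Fin n ⊕ Fin n) → ℝ))
    (hV₀ : V₀ = Submodule.span ℝ
      (Set.range (fun k => fun i => (l k i).re) ∪ Set.range (fun k => fun i => (l k i).im)))
    (V : ℕ → Submodule ℝ ((Fin n ⊕ Fin n) → ℝ))
    (hV : ∀ j : ℕ, V j = ⨆ m ∈ Finset.range (j + 1), Submodule.map (F ^ m).mulVecLin V₀)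
    (R : ℝ → Matrix (Fin n ⊕ Fin n) (Fin n ⊕ Fin n) ℝ)
    (hR : ∀ t, R t = NormedSpace.exp (t • A))
    (D : ℝ → Matrix (Fin n ⊕ Fin n) (Fin n ⊕ Fin n) ℝ)
    (hD : ∀ t, D t = Matrix.of fun i j => ∫ s in (0:ℝ)..t, (R s * M * (R s)ᵀ) i j)
    (C : ℝ → Matrix (Fin n ⊕ Fin n) (Fin n ⊕ Fin n) ℝ)
    (hC : ∀ t, C t = R (-t) * D t * (R (-t))ᵀ)
    (j : ℕ) (hj : 1 ≤ j)
    (ξ : (Fin n ⊕ Fin n) → ℝ) (hξ : ∀ v ∈ V (j - 1), ξ ⬝ᵥ v = 0) :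
    ∃ c t₀ : ℝ, 0 < c ∧ 0 < t₀ ∧ ∀ t : ℝ, 0 ≤ t → t ≤ t₀ →
      ‖(C t).mulVec ξ‖ ≤ c * t ^ (j + 1) := by
  classical
  set re : Fin K → (Fin n ⊕ Fin n) → ℝ := fun k => fun i => (l k i).re with hre
  set im : Fin K → (Fin n ⊕ Fin n) → ℝ := fun k => fun i => (l k i).im with him
  -- generators are in V₀
  have hreV₀ : ∀ k, re k ∈ V₀ := fun k => by
    rw [hV₀]
    exact Submodule.subset_span (Set.mem_union_left _ ⟨k, rfl⟩)
  have himV₀ : ∀ k, im k ∈ V₀ := fun k => by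
    rw [hV₀]
    exact Submodule.subset_span (Set.mem_union_right _ ⟨k, rfl⟩)
  -- V₀ ≤ V m
  have hV0le : ∀ m : ℕ, V₀ ≤ V m := by
    intro m
    rw [hV m]
    have h0 : (0:ℕ) ∈ Finset.range (m+1) := Finset.mem_range.mpr (Nat.succ_pos m)
    have heq : Submodule.map (F ^ 0).mulVecLin V₀ = V₀ := by
      rw [pow_zero, Matrix.mulVecLin_one, Submodule.map_id]
    exact le_trans (le_of_eq heq.symm) (le_iSup_of_le 0 (le_iSup_of_le h0 le_rfl))
  -- monotonicity
  have hVmono : ∀ {a b : ℕ}, a ≤ b → V a ≤ V b := by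
    intro a b hab
    rw [hV a, hV b]
    refine biSup_mono fun i hi => ?_
    simp only [Finset.mem_range] at hi ⊢
    omega
  -- N maps everything into V₀
  have hNmem : ∀ y, N.mulVec y ∈ V₀ := by
    intro y
    rw [hN, aux_sum_mulVec]
    refine Submodule.sum_mem _ fun k _ => ?_
    rw [Matrix.sub_mulVec, aux_vecMulVec_mulVec, aux_vecMulVec_mulVec]
    exact Submodule.sub_mem _ (Submodule.smul_mem _ _ (hreV₀ k))
      (Submodule.smul_mem _ _ (himV₀ k))
  have hNΩmem : ∀ y, (N * Ω).mulVec y ∈ V₀ := by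
    intro y
    rw [← Matrix.mulVec_mulVec]
    exact hNmem _
  -- A maps V m into V (m+1)
  have hstep : ∀ m : ℕ, ∀ x ∈ V m, A.mulVec x ∈ V (m+1) := by
    intro m
    have hle : V m ≤ Submodule.comap A.mulVecLin (V (m+1)) := by
      rw [hV m]
      refine iSup_le fun i => iSup_le fun hi => ?_
      rintro x ⟨v, hv, rfl⟩
      simp only [Submodule.mem_comap, Matrix.mulVecLin_apply]
      rw [hA, Matrix.add_mulVec]
      refine Submodule.add_mem _ ?_ (hV0le (m+1) (hNΩmem _))
      rw [Matrix.mulVec_mulVec, ← pow_succ']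
      rw [hV (m+1)]
      have hi' : i + 1 ∈ Finset.range (m+2) := by
        simp only [Finset.mem_range] at hi ⊢
        omega
      have hle2 : Submodule.map (F ^ (i+1)).mulVecLin V₀ ≤
          ⨆ i ∈ Finset.range (m+2), Submodule.map (F ^ i).mulVecLin V₀ :=
        le_iSup_of_le (i+1) (le_iSup_of_le hi' le_rfl)
      exact hle2 ⟨v, hv, by rw [Matrix.mulVecLin_apply]⟩
    exact fun x hx => hle hx
  -- A^m maps V₀ into V m
  have hAm : ∀ m : ℕ, ∀ v ∈ V₀, (A ^ m).mulVec v ∈ V m := by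
    intro m
    induction m with
    | zero => intro v hv; rw [pow_zero, Matrix.one_mulVec]; exact hV0le 0 hv
    | succ m ih =>
      intro v hv
      rw [pow_succ', ← Matrix.mulVec_mulVec]
      exact hstep m _ (ih v hv)
  -- orthogonality of ξ to A^m V₀ for m < j
  have hort : ∀ m < j, ∀ v ∈ V₀, ξ ⬝ᵥ (A ^ m).mulVec v = 0 := by
    intro m hm v hv
    refine hξ _ (hVmono ?_ (hAm m v hv))
    omega
  -- vanishing of M (Aᵀ)^m ξ for m < j
  have hvan : ∀ m < j, M.mulVec ((Aᵀ ^ m).mulVec ξ) = 0 := by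
    intro m hm
    have hdot : ∀ a, a ∈ V₀ → a ⬝ᵥ (Aᵀ ^ m).mulVec ξ = 0 := by
      intro a ha
      rw [← Matrix.transpose_pow, Matrix.mulVec_transpose, dotProduct_comm,
        ← Matrix.dotProduct_mulVec]
      exact hort m hm a ha
    rw [hM, aux_sum_mulVec]
    refine Finset.sum_eq_zero fun k _ => ?_
    rw [Matrix.add_mulVec, aux_vecMulVec_mulVec, aux_vecMulVec_mulVec,
      hdot _ (hreV₀ k), hdot _ (himV₀ k), zero_smul, zero_smul, add_zero]
  -- key analytic bound
  obtain ⟨c₁, hc₁pos, hkey⟩ := aux_key Aᵀ M ξ j hvan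
  obtain ⟨cE, hcEpos, hE⟩ := aux_exp_mulVec_bound A
  -- transpose of R
  have hRT : ∀ u : ℝ, (R u)ᵀ = exp (u • Aᵀ) := by
    intro u
    rw [hR u, ← Matrix.exp_transpose, Matrix.transpose_smul]
  -- group property
  have hRadd : ∀ a b : ℝ, R (a + b) = R a * R b := by
    intro a b
    rw [hR, hR, hR, add_smul]
    exact Matrix.exp_add_of_commute _ _ (((Commute.refl A).smul_left a).smul_right b)
  -- continuity of R
  have hRcont : Continuous fun u : ℝ => R u := by
    have : (fun u : ℝ => R u) = fun u : ℝ => exp (u • A) := funext hR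
    rw [this]
    exact aux_exp_continuous A
  refine ⟨cE * (cE * c₁) + 1, 1, by positivity, one_pos, fun t ht0 ht1 => ?_⟩
  set w : (Fin n ⊕ Fin n) → ℝ := (R (-t))ᵀ.mulVec ξ with hw
  -- pointwise identity for the integrand
  have hpt : ∀ s : ℝ, (R s * M * (R s)ᵀ).mulVec w
      = (R s).mulVec (M.mulVec ((R (s - t))ᵀ.mulVec ξ)) := by
    intro s
    have h1 : (R s)ᵀ * (R (-t))ᵀ = (R (s - t))ᵀ := by
      rw [← Matrix.transpose_mul]
      congr 1
      rw [← hRadd]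
      congr 1
      ring
    calc (R s * M * (R s)ᵀ).mulVec w
        = (R s * M * (R s)ᵀ * (R (-t))ᵀ).mulVec ξ := by rw [hw, Matrix.mulVec_mulVec]
      _ = (R s * (M * ((R s)ᵀ * (R (-t))ᵀ))).mulVec ξ := by rw [mul_assoc, mul_assoc]
      _ = (R s * (M * (R (s - t))ᵀ)).mulVec ξ := by rw [h1]
      _ = (R s).mulVec ((M * (R (s - t))ᵀ).mulVec ξ) := (Matrix.mulVec_mulVec _ _ _).symm
      _ = (R s).mulVec (M.mulVec ((R (s - t))ᵀ.mulVec ξ)) := by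
          simp only [Matrix.mulVec_mulVec, mul_assoc]
  -- bound on the integrand
  have hbnd : ∀ s : ℝ, 0 ≤ s → s ≤ t → ‖(R s * M * (R s)ᵀ).mulVec w‖ ≤ cE * (c₁ * t ^ j) := by
    intro s hs0 hst
    rw [hpt s]
    have habs_s : |s| ≤ 1 := by rw [abs_of_nonneg hs0]; linarith
    have habs_st : |s - t| ≤ 1 := by rw [abs_sub_comm, abs_of_nonneg (by linarith)]; linarith
    have h1 : ‖M.mulVec ((R (s - t))ᵀ.mulVec ξ)‖ ≤ c₁ * t ^ j := by
      rw [hRT]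
      calc ‖M.mulVec ((exp ((s - t) • Aᵀ)).mulVec ξ)‖ ≤ c₁ * |s - t| ^ j :=
            hkey (s - t) habs_st
        _ ≤ c₁ * t ^ j := by
            refine mul_le_mul_of_nonneg_left (pow_le_pow_left₀ (abs_nonneg _) ?_ j) hc₁pos.le
            rw [abs_sub_comm, abs_of_nonneg (by linarith)]
            linarith
    calc ‖(R s).mulVec (M.mulVec ((R (s - t))ᵀ.mulVec ξ))‖
        ≤ cE * ‖M.mulVec ((R (s - t))ᵀ.mulVec ξ)‖ := by
          rw [hR s]; exact hE s habs_s _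
      _ ≤ cE * (c₁ * t ^ j) := mul_le_mul_of_nonneg_left h1 hcEpos.le
  -- integrability of entries
  have hcont : ∀ (x : (Fin n ⊕ Fin n) → ℝ) (i : Fin n ⊕ Fin n),
      Continuous fun s : ℝ => ((R s * M * (R s)ᵀ).mulVec x) i := by
    intro x i
    have hmat : Continuous fun s : ℝ => R s * M * (R s)ᵀ :=
      (hRcont.matrix_mul continuous_const).matrix_mul hRcont.matrix_transpose
    exact (continuous_apply i).comp (hmat.matrix_mulVec continuous_const)
  -- D t applied to w as an interval integral
  have hDi : ∀ i, ((D t).mulVec w) i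
      = ∫ s in (0:ℝ)..t, ((R s * M * (R s)ᵀ).mulVec w) i := by
    intro i
    have hlhs : ((D t).mulVec w) i = ∑ p, (∫ s in (0:ℝ)..t, (R s * M * (R s)ᵀ) i p) * w p := by
      rw [hD t]
      simp [Matrix.mulVec, dotProduct]
    rw [hlhs]
    have hswap : ∀ p : Fin n ⊕ Fin n,
        (∫ s in (0:ℝ)..t, (R s * M * (R s)ᵀ) i p) * w p
          = ∫ s in (0:ℝ)..t, (R s * M * (R s)ᵀ) i p * w p := by
      intro p
      rw [← intervalIntegral.integral_mul_const]
    simp_rw [hswap]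
    rw [← intervalIntegral.integral_finset_sum]
    · refine intervalIntegral.integral_congr fun s _ => ?_
      simp [Matrix.mulVec, dotProduct]
    · intro p _
      exact (Continuous.intervalIntegrable (by
        exact ((hRcont.matrix_mul continuous_const).matrix_mul
          hRcont.matrix_transpose).matrix_elem i p |>.mul continuous_const) 0 t)
  -- bound on D t applied to w
  have hDbnd : ‖(D t).mulVec w‖ ≤ cE * (c₁ * t ^ j) * t := by
    have h0 : (0:ℝ) ≤ cE * (c₁ * t ^ j) * t := by positivity
    rw [pi_norm_le_iff_of_nonneg h0]
    intro i
    rw [hDi i]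
    have := intervalIntegral.norm_integral_le_of_norm_le_const
      (C := cE * (c₁ * t ^ j)) (f := fun s => ((R s * M * (R s)ᵀ).mulVec w) i)
      (a := 0) (b := t) ?_
    · calc ‖∫ s in (0:ℝ)..t, ((R s * M * (R s)ᵀ).mulVec w) i‖
          ≤ cE * (c₁ * t ^ j) * |t - 0| := this
        _ = cE * (c₁ * t ^ j) * t := by rw [sub_zero, abs_of_nonneg ht0]
    · intro s hs
      rw [Set.uIoc_of_le ht0] at hs
      calc ‖((R s * M * (R s)ᵀ).mulVec w) i‖ ≤ ‖(R s * M * (R s)ᵀ).mulVec w‖ :=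
            norm_le_pi_norm _ i
        _ ≤ cE * (c₁ * t ^ j) := hbnd s hs.1.le hs.2
  -- final bound
  have hCt : (C t).mulVec ξ = (R (-t)).mulVec ((D t).mulVec w) := by
    rw [hC t, hw, ← Matrix.mulVec_mulVec, ← Matrix.mulVec_mulVec]
  rw [hCt]
  have habs_t : |(-t : ℝ)| ≤ 1 := by rw [abs_neg, abs_of_nonneg ht0]; linarith
  calc ‖(R (-t)).mulVec ((D t).mulVec w)‖ ≤ cE * ‖(D t).mulVec w‖ := by
        rw [hR (-t)]; exact hE (-t) habs_t _
    _ ≤ cE * (cE * (c₁ * t ^ j) * t) := mul_le_mul_of_nonneg_left hDbnd hcEpos.le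
    _ = cE * (cE * c₁) * t ^ (j + 1) := by ring
    _ ≤ (cE * (cE * c₁) + 1) * t ^ (j + 1) := by
        refine mul_le_mul_of_nonneg_right (by linarith) (by positivity)
end aux
end
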